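/- For every integer n ≥ 2 and every real δ > 0, there exists an n-player cake-cutting instance in class X(n) such that (i) the n-piece allocation giving each player exactly his n owned pieces is envy-free and has egalitarian welfare 1, and (ii) every envy-free contiguous allocation has egalitarian welfare at most 1/n + δ. Consequently POIE_f(n,k) = n for k ≥ n. -/

import Mathlib

open MeasureTheory Set

/-- An `n`-player cake-cutting instance: continuous nonnegative density functions
on `[0,1]`, each of total integral `1`. -/
structure CakeInstance (n : ℕ) where
  d : Fin n → ℝ → ℝ
  cont : ∀ i, ContinuousOn (d i) (Set.Icc 0 1)
  nonneg : ∀ i, ∀ x ∈ Set.Icc (0:ℝ) 1, 0 ≤ d i x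
  total : ∀ i, ∫ x in (0:ℝ)..1, d i x = 1

namespace CakeInstance

/-- Value of player `i` for the interval `[a,b]`. -/
noncomputable def ival {n : ℕ} (C : CakeInstance n) (i : Fin n) (a b : ℝ) : ℝ :=
  ∫ x in a..b, C.d i x

/-- Value of player `i` for a set `S`. -/
noncomputable def sval {n : ℕ} (C : CakeInstance n) (i : Fin n) (S : Set ℝ) : ℝ :=
  ∫ x in S, C.d i x

end CakeInstance

/-- A contiguous allocation: weakly increasing cut points `x 0 = 0 ≤ … ≤ x n = 1`
together with a permutation `σ` assigning the `j`-th interval `[x j, x (j+1)]`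
to player `σ j`. -/
structure ContigAlloc (n : ℕ) where
  x : Fin (n+1) → ℝ
  mono : Monotone x
  first : x 0 = 0
  last : x (Fin.last n) = 1
  σ : Equiv.Perm (Fin n)

/-- The (closed) interval received by player `i` in a contiguous allocation. -/
def cpiece {n : ℕ} (A : ContigAlloc n) (i : Fin n) : Set ℝ :=
  Set.Icc (A.x (A.σ.symm i).castSucc) (A.x (A.σ.symm i).succ)

/-- Value of player `i` for the interval received by player `j`. -/
noncomputable def cval {n : ℕ} (C : CakeInstance n) (A : ContigAlloc n) (i j : Fin n) : ℝ :=
  C.ival i (A.x (A.σ.symm j).castSucc) (A.x (A.σ.symm j).succ)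

/-- Utilitarian welfare of a contiguous allocation. -/
noncomputable def cWelfare {n : ℕ} (C : CakeInstance n) (A : ContigAlloc n) : ℝ :=
  ∑ i, cval C A i i

/-- Egalitarian welfare of a contiguous allocation. -/
noncomputable def cEgal {n : ℕ} (C : CakeInstance n) (A : ContigAlloc n) : ℝ :=
  ⨅ i, cval C A i i

/-- A contiguous allocation is envy-free if nobody prefers another player's interval. -/
def cEnvyFree {n : ℕ} (C : CakeInstance n) (A : ContigAlloc n) : Prop :=
  ∀ i j, cval C A i j ≤ cval C A i i

/-- A `k`-piece allocation: each player `i` receives the union of (at most) `k`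
closed intervals `[lo i m, hi i m] ⊆ [0,1]` (possibly degenerate); all these
intervals are pairwise non-overlapping and together they cover `[0,1]`. -/
structure KPieceAlloc (n k : ℕ) where
  lo : Fin n → Fin k → ℝ
  hi : Fin n → Fin k → ℝ
  le : ∀ i m, lo i m ≤ hi i m
  sub : ∀ i m, Set.Icc (lo i m) (hi i m) ⊆ Set.Icc (0:ℝ) 1
  nonoverlap : ∀ i m i' m', (i, m) ≠ (i', m') →
      Set.Ioo (lo i m) (hi i m) ∩ Set.Ioo (lo i' m') (hi i' m') = ∅
  cover : (⋃ i, ⋃ m, Set.Icc (lo i m) (hi i m)) = Set.Icc (0:ℝ) 1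

/-- Value of player `i` for the portion received by player `j` in a `k`-piece allocation. -/
noncomputable def kval {n k : ℕ} (C : CakeInstance n) (A : KPieceAlloc n k) (i j : Fin n) : ℝ :=
  ∑ m, C.ival i (A.lo j m) (A.hi j m)

/-- Utilitarian welfare of a `k`-piece allocation. -/
noncomputable def kWelfare {n k : ℕ} (C : CakeInstance n) (A : KPieceAlloc n k) : ℝ :=
  ∑ i, kval C A i i

/-- Egalitarian welfare of a `k`-piece allocation. -/
noncomputable def kEgal {n k : ℕ} (C : CakeInstance n) (A : KPieceAlloc n k) : ℝ :=
  ⨅ i, kval C A i i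

/-- A `k`-piece allocation is envy-free if nobody prefers another player's portion. -/
def kEnvyFree {n k : ℕ} (C : CakeInstance n) (A : KPieceAlloc n k) : Prop :=
  ∀ i j, kval C A i j ≤ kval C A i i

/-- A witness that an `n`-player cake-cutting instance lies in the class `X(k)`:
cut points `0 = c 0 < c 1 < … < c (n*k) = 1` and an ownership map under which each
player owns exactly `k` of the pieces `[c j, c (j+1)]` and values the unowned pieces `0`. -/
structure XkWitness {n : ℕ} (C : CakeInstance n) (k : ℕ) where
  c : Fin (n*k+1) → ℝ
  mono : StrictMono c
  first : c 0 = 0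
  last : c (Fin.last (n*k)) = 1
  owner : Fin (n*k) → Fin n
  ownCount : ∀ i : Fin n, (Finset.univ.filter fun j => owner j = i).card = k
  zeroVal : ∀ (i : Fin n) (j : Fin (n*k)), owner j ≠ i →
      C.ival i (c j.castSucc) (c j.succ) = 0

/-- The `j`-th owned piece, as a set. -/
def XkWitness.pieceSet {n k : ℕ} {C : CakeInstance n} (W : XkWitness C k)
    (j : Fin (n*k)) : Set ℝ :=
  Set.Icc (W.c j.castSucc) (W.c j.succ)

/-- Value of player `i` for the `j`-th owned piece. -/
noncomputable def XkWitness.pieceVal {n k : ℕ} {C : CakeInstance n} (W : XkWitness C k)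
    (i : Fin n) (j : Fin (n*k)) : ℝ :=
  C.ival i (W.c j.castSucc) (W.c j.succ)

/-- A `k`-piece allocation gives each player exactly the pieces he owns:
every owned piece occurs among its owner's allocated intervals. -/
def XkWitness.givesOwnedPieces {n k : ℕ} {C : CakeInstance n} (W : XkWitness C k)
    (A : KPieceAlloc n k) : Prop :=
  ∀ j : Fin (n*k), ∃ m : Fin k,
    A.lo (W.owner j) m = W.c j.castSucc ∧ A.hi (W.owner j) m = W.c j.succ


section AuxPOIE
open MeasureTheory Set intervalIntegral
noncomputable section

open MeasureTheory Set intervalIntegral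

noncomputable section

/-- the quadratic bump supported on `[u,v]`. -/
def qbump (u v x : ℝ) : ℝ := max 0 ((x - u) * (v - x))

lemma qbump_continuous (u v : ℝ) : Continuous (qbump u v) := by
  unfold qbump
  exact continuous_const.max (((continuous_id.sub continuous_const)).mul
    (continuous_const.sub continuous_id))

lemma qbump_nonneg (u v x : ℝ) : 0 ≤ qbump u v x := le_max_left _ _

lemma qbump_intble (u v a b : ℝ) : IntervalIntegrable (qbump u v) volume a b :=
  (qbump_continuous u v).intervalIntegrable a b

lemma qbump_eq_zero_left {u v x : ℝ} (huv : u ≤ v) (hx : x ≤ u) : qbump u v x = 0 := by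
  unfold qbump
  have : (x - u) * (v - x) ≤ 0 :=
    mul_nonpos_of_nonpos_of_nonneg (by linarith) (by linarith)
  exact max_eq_left this

lemma qbump_eq_zero_right {u v x : ℝ} (huv : u ≤ v) (hx : v ≤ x) : qbump u v x = 0 := by
  unfold qbump
  have : (x - u) * (v - x) ≤ 0 :=
    mul_nonpos_of_nonneg_of_nonpos (by linarith) (by linarith)
  exact max_eq_left this

lemma integral_quadratic (u v : ℝ) :
    ∫ x in u..v, (x - u) * (v - x) = (v - u)^3 / 6 := by
  have h : ∀ x ∈ Set.uIcc u v, HasDerivAt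
      (fun x => -(x^3)/3 + (u+v)*x^2/2 - u*v*x) ((x - u) * (v - x)) x := by
    intro x _
    have : HasDerivAt (fun x : ℝ => -(x^3)/3 + (u+v)*x^2/2 - u*v*x)
        (-(3*x^2)/3 + (u+v)*(2*x)/2 - u*v) x := by
      apply HasDerivAt.sub
      apply HasDerivAt.add
      · exact ((hasDerivAt_pow 3 x).neg).div_const 3
      · simpa using (((hasDerivAt_pow 2 x).const_mul (u+v)).div_const 2)
      · simpa using (hasDerivAt_id x).const_mul (u*v)
    convert this using 1
    ring
  rw [intervalIntegral.integral_eq_sub_of_hasDerivAt h]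
  · ring
  · exact (((continuous_id.sub continuous_const)).mul
      (continuous_const.sub continuous_id)).intervalIntegrable u v

lemma integral_qbump_self {u v : ℝ} (huv : u ≤ v) :
    ∫ x in u..v, qbump u v x = (v - u)^3 / 6 := by
  rw [← integral_quadratic u v]
  apply intervalIntegral.integral_congr
  intro x hx
  rw [Set.uIcc_of_le huv] at hx
  exact max_eq_right (mul_nonneg (by linarith [hx.1]) (by linarith [hx.2]))

lemma integral_qbump_zero_of_le {u v a b : ℝ} (huv : u ≤ v) (h : b ≤ u ∨ v ≤ a)
    (hab : a ≤ b) : ∫ x in a..b, qbump u v x = 0 := by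
  rw [show (0:ℝ) = ∫ x in a..b, (0:ℝ) by simp]
  apply intervalIntegral.integral_congr
  intro x hx
  rw [Set.uIcc_of_le hab] at hx
  rcases h with h | h
  · exact qbump_eq_zero_left huv (hx.2.trans h)
  · exact qbump_eq_zero_right huv (h.trans hx.1)

lemma integral_qbump_nonneg {u v a b : ℝ} (hab : a ≤ b) :
    0 ≤ ∫ x in a..b, qbump u v x :=
  intervalIntegral.integral_nonneg hab (fun x _ => qbump_nonneg u v x)

lemma integral_qbump_le {u v a b : ℝ} (huv : u ≤ v) (hab : a ≤ b) :
    ∫ x in a..b, qbump u v x ≤ (v - u)^3 / 6 := by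
  set A := min a u with hA
  set B := max b v with hB
  have h1 : ∫ x in a..b, qbump u v x ≤ ∫ x in A..B, qbump u v x := by
    apply intervalIntegral.integral_mono_interval (min_le_left a u) hab (le_max_left b v)
    · filter_upwards with x using qbump_nonneg u v x
    · exact qbump_intble u v A B
  have hsplit : ∫ x in A..B, qbump u v x =
      (∫ x in A..u, qbump u v x) + (∫ x in u..v, qbump u v x) + (∫ x in v..B, qbump u v x) := by
    have e1 := intervalIntegral.integral_add_adjacent_intervals (qbump_intble u v A u) (qbump_intble u v u v)
    have e2 := intervalIntegral.integral_add_adjacent_intervals ((qbump_intble u v A u).trans (qbump_intble u v u v)) (qbump_intble u v v B)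
    rw [← e2, ← e1]
  have hz1 : ∫ x in A..u, qbump u v x = 0 :=
    integral_qbump_zero_of_le huv (Or.inl le_rfl) (min_le_right a u)
  have hz2 : ∫ x in v..B, qbump u v x = 0 :=
    integral_qbump_zero_of_le huv (Or.inr le_rfl) (le_max_right b v)
  calc ∫ x in a..b, qbump u v x ≤ ∫ x in A..B, qbump u v x := h1
    _ = (v - u)^3/6 := by rw [hsplit, hz1, hz2, integral_qbump_self huv]; ring

lemma integral_qbump_pos_imp {u v a b : ℝ} (huv : u ≤ v) (hab : a ≤ b)
    (h : 0 < ∫ x in a..b, qbump u v x) : a < v ∧ u < b := by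
  constructor
  · by_contra hc
    push_neg at hc
    rw [integral_qbump_zero_of_le huv (Or.inr hc) hab] at h
    exact lt_irrefl 0 h
  · by_contra hc
    push_neg at hc
    rw [integral_qbump_zero_of_le huv (Or.inl hc) hab] at h
    exact lt_irrefl 0 h

end

/-- owner of piece `j` among `n*n` pieces. -/
def ownerN (n j : ℕ) : ℕ := if j % (n+1) = 0 then 0 else j/(n+1) + 1

/-- index of the `m`-th piece of player `i`. -/
def pidxN (n i m : ℕ) : ℕ := match i with
  | 0 => m*(n+1)
  | q+1 => q*(n+1)+1+m

lemma ownerN_lt (n : ℕ) (hn : 2 ≤ n) (j : ℕ) (hj : j < n*n) : ownerN n j < n := by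
  obtain ⟨k, rfl⟩ : ∃ k, n = k + 2 := ⟨n - 2, by omega⟩
  unfold ownerN
  split
  · omega
  · rename_i h
    have hd := Nat.div_add_mod j (k+2+1)
    have hmod : j % (k+2+1) < k+2+1 := Nat.mod_lt _ (by omega)
    by_contra hc
    push_neg at hc
    have h1 : (k+1)*(k+2+1) ≤ (j/(k+2+1))*(k+2+1) := Nat.mul_le_mul_right _ (by omega)
    have h2 : (k+1)*(k+2+1) + 1 = (k+2)*(k+2) := by ring
    have h3 : (k+2+1)*(j/(k+2+1)) = (j/(k+2+1))*(k+2+1) := Nat.mul_comm _ _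
    omega

lemma pidxN_lt (n : ℕ) (hn : 2 ≤ n) {i m : ℕ} (hi : i < n) (hm : m < n) :
    pidxN n i m < n*n := by
  obtain ⟨k, rfl⟩ : ∃ k, n = k + 2 := ⟨n - 2, by omega⟩
  match i with
  | 0 =>
    show m*(k+3) < (k+2)*(k+2)
    have h1 : m*(k+3) ≤ (k+1)*(k+3) := Nat.mul_le_mul_right _ (by omega)
    have h2 : (k+1)*(k+3) + 1 = (k+2)*(k+2) := by ring
    omega
  | q+1 =>
    show q*(k+3)+1+m < (k+2)*(k+2)
    have h1 : q*(k+3) ≤ k*(k+3) := Nat.mul_le_mul_right _ (by omega)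
    have h2 : k*(k+3) + k + 4 = (k+2)*(k+2) := by ring
    omega

lemma ownerN_pidxN (n : ℕ) {i m : ℕ} (hm : m < n) : ownerN n (pidxN n i m) = i := by
  match i with
  | 0 =>
    show ownerN n (m*(n+1)) = 0
    have h : m*(n+1) % (n+1) = 0 := Nat.mul_mod_left m (n+1)
    unfold ownerN
    rw [if_pos h]
  | q+1 =>
    show ownerN n (q*(n+1)+1+m) = q+1
    have h0 : q*(n+1)+1+m = (n+1)*q + (1+m) := by ring
    have h1 : (q*(n+1)+1+m) % (n+1) = 1+m := by
      rw [h0, Nat.mul_add_mod]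
      exact Nat.mod_eq_of_lt (by omega)
    have h2 : (q*(n+1)+1+m) / (n+1) = q := by
      rw [h0, Nat.mul_add_div (by omega)]
      have : (1+m)/(n+1) = 0 := Nat.div_eq_of_lt (by omega)
      omega
    unfold ownerN
    rw [if_neg (by omega), h2]

lemma pidxN_inj (n : ℕ) {i m m' : ℕ} (h : pidxN n i m = pidxN n i m') : m = m' := by
  match i with
  | 0 => exact Nat.eq_of_mul_eq_mul_right (by omega) h
  | q+1 => simpa [pidxN] using h

/-- characterization of the pieces owned by player `i`. -/
lemma owned_iff (n : ℕ) (hn : 2 ≤ n) {i : ℕ} (hi : i < n) (j : ℕ) :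
    (j < n*n ∧ ownerN n j = i) ↔ ∃ m, m < n ∧ pidxN n i m = j := by
  constructor
  · rintro ⟨hj, ho⟩
    have hd := Nat.div_add_mod j (n+1)
    have hmod : j % (n+1) < n+1 := Nat.mod_lt _ (by omega)
    unfold ownerN at ho
    by_cases h : j % (n+1) = 0
    · rw [if_pos h] at ho
      subst ho
      refine ⟨j/(n+1), ?_, ?_⟩
      · by_contra hc
        push_neg at hc
        have h1 : n*(n+1) ≤ (j/(n+1))*(n+1) := Nat.mul_le_mul_right _ hc
        have h2 : n*(n+1) = n*n + n := by ring
        have h3 : (n+1)*(j/(n+1)) = (j/(n+1))*(n+1) := Nat.mul_comm _ _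
        omega
      · show (j/(n+1))*(n+1) = j
        have h3 : (n+1)*(j/(n+1)) = (j/(n+1))*(n+1) := Nat.mul_comm _ _
        omega
    · rw [if_neg h] at ho
      match i, ho with
      | q+1, ho =>
        have hq : j/(n+1) = q := by omega
        rw [hq] at hd
        have h3 : (n+1)*q = q*(n+1) := Nat.mul_comm _ _
        refine ⟨j % (n+1) - 1, by omega, ?_⟩
        show q*(n+1)+1+(j % (n+1) - 1) = j
        omega
  · rintro ⟨m, hm, rfl⟩
    exact ⟨pidxN_lt n hn hi hm, ownerN_pidxN n hm⟩

/-- each player owns exactly `n` pieces. -/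
lemma card_owned (n : ℕ) (hn : 2 ≤ n) {i : ℕ} (hi : i < n) :
    ((Finset.range (n*n)).filter (fun j => ownerN n j = i)).card = n := by
  have heq : ((Finset.range (n*n)).filter (fun j => ownerN n j = i)) =
      (Finset.range n).image (fun m => pidxN n i m) := by
    ext j
    simp only [Finset.mem_filter, Finset.mem_range, Finset.mem_image]
    rw [owned_iff n hn hi]
  rw [heq, Finset.card_image_of_injective _ (fun a b h => pidxN_inj n h), Finset.card_range]

/-- the block structure: pieces of player `q+1` lie strictly between
consecutive pieces of player `0`. -/
lemma owned_block (n : ℕ) {q j : ℕ} (hq : ownerN n j = q + 1) :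
    q*(n+1) + 1 ≤ j ∧ j + 1 ≤ (q+1)*(n+1) := by
  unfold ownerN at hq
  have hd := Nat.div_add_mod j (n+1)
  have hmod : j % (n+1) < n+1 := Nat.mod_lt _ (by omega)
  by_cases h : j % (n+1) = 0
  · rw [if_pos h] at hq; omega
  · rw [if_neg h] at hq
    have hdiv : j/(n+1) = q := by omega
    rw [hdiv] at hd
    have h3 : (n+1)*q = q*(n+1) := Nat.mul_comm _ _
    have h4 : (q+1)*(n+1) = q*(n+1) + (n+1) := by ring
    omega

section Density
variable (n : ℕ)

/-- cut points `j / n²`. -/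
def crn (j : ℕ) : ℝ := (j : ℝ) / ((n : ℝ) * n)

lemma crn_mono (hn : 2 ≤ n) {j j' : ℕ} (h : j ≤ j') : crn n j ≤ crn n j' := by
  unfold crn
  have h0 : (0:ℝ) < (n:ℝ) := by exact_mod_cast (by omega : 0 < n)
  have hnn : (0:ℝ) < (n:ℝ) * n := mul_pos h0 h0
  rw [div_le_div_iff_of_pos_right hnn]
  exact_mod_cast h

lemma crn_strict (hn : 2 ≤ n) {j j' : ℕ} (h : j < j') : crn n j < crn n j' := by
  unfold crn
  have h0 : (0:ℝ) < (n:ℝ) := by exact_mod_cast (by omega : 0 < n)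
  have hnn : (0:ℝ) < (n:ℝ) * n := mul_pos h0 h0
  rw [div_lt_div_iff_of_pos_right hnn]
  exact_mod_cast h

lemma crn_zero : crn n 0 = 0 := by simp [crn]

lemma crn_last (hn : 2 ≤ n) : crn n (n*n) = 1 := by
  have : ((n*n : ℕ) : ℝ) = (n:ℝ)*n := by push_cast; ring
  rw [crn, this]
  have h0 : (n:ℝ) ≠ 0 := by
    have : (0:ℝ) < (n:ℝ) := by exact_mod_cast (by omega : 0 < n)
    linarith
  field_simp

lemma crn_diff (hn : 2 ≤ n) (j : ℕ) : crn n (j+1) - crn n j = 1 / ((n:ℝ)*n) := by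
  unfold crn
  push_cast
  ring

/-- density of player `i`. -/
def dens (i : ℕ) (x : ℝ) : ℝ :=
  6*(n:ℝ)^5 * ∑ j ∈ Finset.range (n*n),
    if ownerN n j = i then qbump (crn n j) (crn n (j+1)) x else 0

lemma dens_cont (i : ℕ) : Continuous (dens n i) := by
  apply Continuous.mul continuous_const
  apply continuous_finset_sum
  intro j _
  by_cases h : ownerN n j = i
  · simpa [h] using qbump_continuous (crn n j) (crn n (j+1))
  · simp [h]
    exact continuous_const

lemma dens_nonneg (i : ℕ) (x : ℝ) : 0 ≤ dens n i x := by
  apply mul_nonneg (by positivity)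
  apply Finset.sum_nonneg
  intro j _
  split
  · exact qbump_nonneg _ _ _
  · exact le_refl 0

lemma dens_intble (i : ℕ) (a b : ℝ) : IntervalIntegrable (dens n i) volume a b :=
  (dens_cont n i).intervalIntegrable a b

/-- integral of the density over an interval, as a sum of bump integrals. -/
lemma intg_dens (i : ℕ) (a b : ℝ) :
    ∫ x in a..b, dens n i x = 6*(n:ℝ)^5 * ∑ j ∈ Finset.range (n*n),
      if ownerN n j = i then ∫ x in a..b, qbump (crn n j) (crn n (j+1)) x else 0 := by
  unfold dens
  rw [intervalIntegral.integral_const_mul]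
  congr 1
  rw [intervalIntegral.integral_finset_sum]
  · apply Finset.sum_congr rfl
    intro j _
    by_cases h : ownerN n j = i <;> simp [h]
  · intro j _
    by_cases h : ownerN n j = i
    · simpa [h] using qbump_intble (crn n j) (crn n (j+1)) a b
    · simpa [h] using intervalIntegrable_const

end Density

lemma integral_qbump_of_subset {u v a b : ℝ} (hau : a ≤ u) (huv : u ≤ v) (hvb : v ≤ b) :
    ∫ x in a..b, qbump u v x = (v - u)^3 / 6 := by
  have e1 := intervalIntegral.integral_add_adjacent_intervals (qbump_intble u v a u) (qbump_intble u v u v)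
  have e2 := intervalIntegral.integral_add_adjacent_intervals ((qbump_intble u v a u).trans (qbump_intble u v u v)) (qbump_intble u v v b)
  have hz1 : ∫ x in a..u, qbump u v x = 0 :=
    integral_qbump_zero_of_le huv (Or.inl le_rfl) hau
  have hz2 : ∫ x in v..b, qbump u v x = 0 :=
    integral_qbump_zero_of_le huv (Or.inr le_rfl) hvb
  have hs := integral_qbump_self huv
  rw [← e2, ← e1, hz1, hz2, hs]
  ring

section PieceVals
variable (n : ℕ)
variable (hn : 2 ≤ n)
include hn

/-- the value of a single piece for player `i`. -/
lemma piece_val {p : ℕ} (hp : p < n*n) (i : ℕ) :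
    ∫ x in crn n p..crn n (p+1), dens n i x
      = if ownerN n p = i then 1/(n:ℝ) else 0 := by
  have hnR : (0:ℝ) < (n:ℝ) := by exact_mod_cast (by omega : 0 < n)
  rw [intg_dens]
  have hsum : ∑ j ∈ Finset.range (n*n),
      (if ownerN n j = i then ∫ x in crn n p..crn n (p+1), qbump (crn n j) (crn n (j+1)) x else 0)
      = if ownerN n p = i then (1/((n:ℝ)*n))^3/6 else 0 := by
    rw [Finset.sum_eq_single_of_mem p (Finset.mem_range.mpr hp)]
    · have hself : ∫ x in crn n p..crn n (p+1), qbump (crn n p) (crn n (p+1)) x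
          = (1/((n:ℝ)*n))^3/6 := by
        rw [integral_qbump_self (crn_mono n hn (by omega : p ≤ p+1)), crn_diff n hn]
      split <;> simp [hself]
    · intro j _ hj
      have hz : ∫ x in crn n p..crn n (p+1), qbump (crn n j) (crn n (j+1)) x = 0 := by
        rcases Nat.lt_or_ge j p with h | h
        · exact integral_qbump_zero_of_le (crn_mono n hn (by omega))
            (Or.inr (crn_mono n hn (by omega : j+1 ≤ p)))
            (crn_mono n hn (by omega : p ≤ p+1))
        · exact integral_qbump_zero_of_le (crn_mono n hn (by omega))
            (Or.inl (crn_mono n hn (by omega : p+1 ≤ j)))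
            (crn_mono n hn (by omega : p ≤ p+1))
      simp [hz]
  rw [hsum]
  split
  · field_simp
  · ring

/-- total value is 1. -/
lemma dens_total {i : ℕ} (hi : i < n) : ∫ x in (0:ℝ)..1, dens n i x = 1 := by
  have hnR : (0:ℝ) < (n:ℝ) := by exact_mod_cast (by omega : 0 < n)
  rw [intg_dens]
  have hsum : ∑ j ∈ Finset.range (n*n),
      (if ownerN n j = i then ∫ x in (0:ℝ)..1, qbump (crn n j) (crn n (j+1)) x else 0)
      = (n:ℝ) * ((1/((n:ℝ)*n))^3/6) := by
    have hterm : ∀ j ∈ Finset.range (n*n),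
        (if ownerN n j = i then ∫ x in (0:ℝ)..1, qbump (crn n j) (crn n (j+1)) x else 0)
        = if ownerN n j = i then (1/((n:ℝ)*n))^3/6 else 0 := by
      intro j hj
      rw [Finset.mem_range] at hj
      have h1 : (0:ℝ) ≤ crn n j := by
        rw [← crn_zero n]; exact crn_mono n hn (by omega)
      have h2 : crn n (j+1) ≤ 1 := by
        rw [← crn_last n hn]; exact crn_mono n hn (by omega)
      rw [integral_qbump_of_subset h1 (crn_mono n hn (by omega : j ≤ j+1)) h2, crn_diff n hn]
    rw [Finset.sum_congr rfl hterm, ← Finset.sum_filter, Finset.sum_const,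
      card_owned n hn hi, nsmul_eq_mul]
  rw [hsum]
  field_simp

end PieceVals

section MoreLemmas
variable (n : ℕ)
variable (hn : 2 ≤ n)
include hn

/-- player `q+1`'s density vanishes outside his block. -/
lemma dens_block_zero (q : ℕ) (x : ℝ)
    (h : x ≤ crn n (q*(n+1)+1) ∨ crn n ((q+1)*(n+1)) ≤ x) :
    dens n (q+1) x = 0 := by
  unfold dens
  rw [mul_eq_zero]
  right
  apply Finset.sum_eq_zero
  intro j _
  split
  · rename_i ho
    obtain ⟨hb1, hb2⟩ := owned_block n ho
    rcases h with h | h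
    · exact qbump_eq_zero_left (crn_mono n hn (by omega))
        (h.trans (crn_mono n hn hb1))
    · exact qbump_eq_zero_right (crn_mono n hn (by omega))
        ((crn_mono n hn hb2).trans h)
  · rfl

/-- dichotomy for player 0's value of an interval. -/
lemma val0_cases (a b : ℝ) (hab : a ≤ b) :
    (∫ x in a..b, dens n 0 x ≤ 1/(n:ℝ)) ∨
    ∃ j1 j2, j1 < n*n ∧ j2 < n*n ∧ ownerN n j1 = 0 ∧ ownerN n j2 = 0 ∧ j1 < j2 ∧
      a < crn n (j1+1) ∧ crn n j2 < b := by
  have hnR : (0:ℝ) < (n:ℝ) := by exact_mod_cast (by omega : 0 < n)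
  set I : ℕ → ℝ := fun j => ∫ x in a..b, qbump (crn n j) (crn n (j+1)) x with hI
  have hInn : ∀ j, 0 ≤ I j := fun j => integral_qbump_nonneg hab
  by_cases hex : ∃ j1, ∃ j2, (j1 < n*n ∧ ownerN n j1 = 0) ∧ (j2 < n*n ∧ ownerN n j2 = 0)
      ∧ j1 ≠ j2 ∧ 0 < I j1 ∧ 0 < I j2
  · right
    obtain ⟨j1, j2, ⟨hj1, ho1⟩, ⟨hj2, ho2⟩, hne, hp1, hp2⟩ := hex
    rcases Nat.lt_or_ge j1 j2 with hlt | hge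
    · refine ⟨j1, j2, hj1, hj2, ho1, ho2, hlt, ?_, ?_⟩
      · exact (integral_qbump_pos_imp (crn_mono n hn (by omega)) hab hp1).1
      · exact (integral_qbump_pos_imp (crn_mono n hn (by omega)) hab hp2).2
    · have hlt : j2 < j1 := by omega
      refine ⟨j2, j1, hj2, hj1, ho2, ho1, hlt, ?_, ?_⟩
      · exact (integral_qbump_pos_imp (crn_mono n hn (by omega)) hab hp2).1
      · exact (integral_qbump_pos_imp (crn_mono n hn (by omega)) hab hp1).2
  · left
    push_neg at hex
    have hsumle : ∑ j ∈ Finset.range (n*n),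
        (if ownerN n j = 0 then I j else 0) ≤ (1/((n:ℝ)*n))^3/6 := by
      rw [← Finset.sum_filter]
      set S := (Finset.range (n*n)).filter (fun j => ownerN n j = 0) with hS
      by_cases hone : ∃ j0 ∈ S, 0 < I j0
      · obtain ⟨j0, hj0, hj0pos⟩ := hone
        have hmem : ∀ j ∈ S, j < n*n ∧ ownerN n j = 0 := by
          intro j hj
          simp only [hS, Finset.mem_filter, Finset.mem_range] at hj
          exact hj
        have hz : ∀ j ∈ S, j ≠ j0 → I j = 0 := by
          intro j hj hne
          by_contra hc
          have hpos : 0 < I j := lt_of_le_of_ne (hInn j) (Ne.symm hc)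
          have := hex j j0 (hmem j hj) (hmem j0 hj0) hne hpos
          linarith
        rw [Finset.sum_eq_single_of_mem j0 hj0 hz]
        have := integral_qbump_le (u := crn n j0) (v := crn n (j0+1))
          (crn_mono n hn (by omega)) hab
        rw [crn_diff n hn] at this
        exact this
      · push_neg at hone
        have : ∀ j ∈ S, I j = 0 := fun j hj => le_antisymm (hone j hj) (hInn j)
        rw [Finset.sum_congr rfl this, Finset.sum_const, smul_zero]
        positivity
    rw [intg_dens]
    calc 6*(n:ℝ)^5 * ∑ j ∈ Finset.range (n*n), (if ownerN n j = 0 then I j else 0)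
        ≤ 6*(n:ℝ)^5 * ((1/((n:ℝ)*n))^3/6) := by
          apply mul_le_mul_of_nonneg_left hsumle (by positivity)
      _ = 1/(n:ℝ) := by field_simp

/-- every point of `[0,1]` lies in some piece. -/
lemma exists_piece {x : ℝ} (hx : x ∈ Set.Icc (0:ℝ) 1) :
    ∃ j, j < n*n ∧ crn n j ≤ x ∧ x ≤ crn n (j+1) := by
  obtain ⟨hx0, hx1⟩ := hx
  have hN : 0 < n*n := by positivity
  have hNR : (0:ℝ) < ((n*n : ℕ) : ℝ) := by exact_mod_cast hN
  have hcast : ((n*n : ℕ) : ℝ) = (n:ℝ)*n := by push_cast; ring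
  by_cases hx1' : x = 1
  · refine ⟨n*n - 1, by omega, ?_, ?_⟩
    · rw [hx1', ← crn_last n hn]
      exact crn_mono n hn (by omega)
    · rw [hx1']
      have : n*n - 1 + 1 = n*n := by omega
      rw [this, crn_last n hn]
  · have hxlt : x < 1 := lt_of_le_of_ne hx1 hx1'
    set t := ⌊x * ((n*n : ℕ) : ℝ)⌋₊ with ht
    have hxN : 0 ≤ x * ((n*n : ℕ) : ℝ) := by positivity
    have h1 : (t : ℝ) ≤ x * ((n*n : ℕ) : ℝ) := Nat.floor_le hxN
    have h2 : x * ((n*n : ℕ) : ℝ) < (t : ℝ) + 1 := Nat.lt_floor_add_one _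
    have htN : t < n*n := by
      have : x * ((n*n : ℕ) : ℝ) < ((n*n : ℕ) : ℝ) := by nlinarith
      have : (t:ℝ) < ((n*n : ℕ) : ℝ) := lt_of_le_of_lt h1 this
      exact_mod_cast this
    refine ⟨t, htN, ?_, ?_⟩
    · rw [crn, div_le_iff₀ (by rw [← hcast]; exact hNR)]
      rw [← hcast]
      exact h1
    · rw [crn, le_div_iff₀ (by rw [← hcast]; exact hNR)]
      rw [← hcast]
      push_cast at h2 ⊢
      linarith

end MoreLemmas
end
end AuxPOIE

/-- For every `n ≥ 2` and `δ > 0` there is an `n`-player instance in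
`X(n)` in which the `n`-piece allocation giving each player his own pieces is envy-free
with egalitarian welfare `1`, while every envy-free contiguous allocation has
egalitarian welfare at most `1/n + δ`; consequently `POIE_f(n,k) = n` for `k ≥ n`. -/
theorem poief_large_k (n : ℕ) (hn : 2 ≤ n) (δ : ℝ) (hδ : 0 < δ) :
    ∃ (C : CakeInstance n) (W : XkWitness C n),
      (∃ A : KPieceAlloc n n, W.givesOwnedPieces A ∧ kEnvyFree C A ∧
        kEgal C A = 1) ∧
      (∀ B : ContigAlloc n, cEnvyFree C B → cEgal C B ≤ 1/(n:ℝ) + δ) := by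
  classical
  have hnR : (0:ℝ) < (n:ℝ) := by exact_mod_cast (by omega : 0 < n)
  have hnem : Nonempty (Fin n) := ⟨⟨0, by omega⟩⟩
  have hpl : ∀ (i m : Fin n), pidxN n (i:ℕ) (m:ℕ) < n*n :=
    fun i m => pidxN_lt n hn i.isLt m.isLt
  let C0 : CakeInstance n :=
    { d := fun i x => dens n (i:ℕ) x
      cont := fun i => (dens_cont n (i:ℕ)).continuousOn
      nonneg := fun i x _ => dens_nonneg n (i:ℕ) x
      total := fun i => dens_total n hn i.isLt }
  let W0 : XkWitness C0 n :=
    { c := fun j => crn n (j:ℕ)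
      mono := fun a b h => crn_strict n hn h
      first := by show crn n ((0 : Fin (n*n+1)) : ℕ) = 0; norm_num [crn]
      last := by
        show crn n ((Fin.last (n*n) : Fin (n*n+1)) : ℕ) = 1
        rw [Fin.val_last]; exact crn_last n hn
      owner := fun j => ⟨ownerN n (j:ℕ), ownerN_lt n hn _ j.isLt⟩
      ownCount := by
        intro i
        refine Eq.trans ?_ (card_owned n hn i.isLt)
        refine Finset.card_nbij (fun j : Fin (n*n) => (j:ℕ)) ?_ ?_ ?_
        · intro a ha
          simp only [Finset.coe_filter, Finset.mem_coe, Set.mem_setOf_eq, Finset.mem_filter, Finset.mem_univ, true_and] at ha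
          simp only [Finset.coe_filter, Finset.mem_coe, Set.mem_setOf_eq, Finset.mem_filter, Finset.mem_range]
          exact ⟨a.isLt, by rw [← ha]⟩
        · intro a _ b _ hab
          exact Fin.ext hab
        · intro j hj
          simp only [Finset.coe_filter, Set.mem_setOf_eq, Finset.mem_range] at hj
          exact ⟨⟨j, hj.1⟩, by
            simp only [Finset.coe_filter, Set.mem_setOf_eq, Finset.mem_univ, true_and]
            exact Fin.ext hj.2, rfl⟩
      zeroVal := by
        intro i j hji
        have hne : ownerN n (j:ℕ) ≠ (i:ℕ) := fun hc => hji (Fin.ext hc)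
        show (∫ x in crn n ((j:ℕ))..crn n ((j:ℕ)+1), dens n (i:ℕ) x) = 0
        rw [piece_val n hn j.isLt (i:ℕ), if_neg hne] }
  let A0 : KPieceAlloc n n :=
    { lo := fun i m => crn n (pidxN n (i:ℕ) (m:ℕ))
      hi := fun i m => crn n (pidxN n (i:ℕ) (m:ℕ) + 1)
      le := fun i m => crn_mono n hn (Nat.le_succ _)
      sub := by
        intro i m
        apply Set.Icc_subset_Icc
        · rw [← crn_zero n]; exact crn_mono n hn (Nat.zero_le _)
        · rw [← crn_last n hn]; exact crn_mono n hn (hpl i m)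
      nonoverlap := by
        intro i m i' m' hne
        have hpp : pidxN n (i:ℕ) (m:ℕ) ≠ pidxN n (i':ℕ) (m':ℕ) := by
          intro he
          have h1 : (i:ℕ) = (i':ℕ) := by
            rw [← ownerN_pidxN n (i := (i:ℕ)) m.isLt, ← ownerN_pidxN n (i := (i':ℕ)) m'.isLt, he]
          have hii : i = i' := Fin.ext h1
          subst hii
          have hmm : (m:ℕ) = (m':ℕ) := pidxN_inj n he
          exact hne (by rw [Fin.ext hmm])
        apply Set.eq_empty_iff_forall_notMem.mpr
        rintro x ⟨⟨hx1, hx2⟩, ⟨hx3, hx4⟩⟩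
        rcases Nat.lt_or_ge (pidxN n (i:ℕ) (m:ℕ)) (pidxN n (i':ℕ) (m':ℕ)) with h | h
        · have hcc : crn n (pidxN n (i:ℕ) (m:ℕ) + 1) ≤ crn n (pidxN n (i':ℕ) (m':ℕ)) :=
            crn_mono n hn h
          linarith
        · have hlt : pidxN n (i':ℕ) (m':ℕ) < pidxN n (i:ℕ) (m:ℕ) := by omega
          have hcc : crn n (pidxN n (i':ℕ) (m':ℕ) + 1) ≤ crn n (pidxN n (i:ℕ) (m:ℕ)) :=
            crn_mono n hn hlt
          linarith
      cover := by
        apply Set.Subset.antisymm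
        · apply Set.iUnion_subset; intro i; apply Set.iUnion_subset; intro m
          apply Set.Icc_subset_Icc
          · rw [← crn_zero n]; exact crn_mono n hn (Nat.zero_le _)
          · rw [← crn_last n hn]; exact crn_mono n hn (hpl i m)
        · intro x hx
          obtain ⟨j, hj, hx1, hx2⟩ := exists_piece n hn hx
          have hio := ownerN_lt n hn j hj
          obtain ⟨m, hm, hpe⟩ := (owned_iff n hn hio j).mp ⟨hj, rfl⟩
          apply Set.mem_iUnion.mpr
          refine ⟨⟨ownerN n j, hio⟩, Set.mem_iUnion.mpr ⟨⟨m, hm⟩, ?_⟩⟩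
          show x ∈ Set.Icc (crn n (pidxN n (ownerN n j) m)) (crn n (pidxN n (ownerN n j) m + 1))
          rw [hpe]
          exact ⟨hx1, hx2⟩ }
  have hkv : ∀ i j : Fin n, kval C0 A0 i j = if i = j then 1 else 0 := by
    intro i j
    show (∑ m : Fin n, ∫ x in crn n (pidxN n (j:ℕ) (m:ℕ))..crn n (pidxN n (j:ℕ) (m:ℕ) + 1),
      dens n (i:ℕ) x) = if i = j then 1 else 0
    have hterm : ∀ m : Fin n,
        (∫ x in crn n (pidxN n (j:ℕ) (m:ℕ))..crn n (pidxN n (j:ℕ) (m:ℕ) + 1),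
          dens n (i:ℕ) x) = if (j:ℕ) = (i:ℕ) then 1/(n:ℝ) else 0 := by
      intro m
      rw [piece_val n hn (hpl j m) (i:ℕ), ownerN_pidxN n m.isLt]
    rw [Finset.sum_congr rfl (fun m _ => hterm m)]
    by_cases hij : i = j
    · subst hij
      rw [if_pos (rfl : (i:ℕ) = (i:ℕ)), if_pos rfl]
      rw [Finset.sum_const, Finset.card_univ, Fintype.card_fin, nsmul_eq_mul]
      field_simp
    · have hne : (j:ℕ) ≠ (i:ℕ) := fun h => hij (Fin.ext h.symm)
      rw [if_neg hij, if_neg hne]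
      simp
  refine ⟨C0, W0, ⟨A0, ?_, ?_, ?_⟩, ?_⟩
  · -- givesOwnedPieces
    intro j
    have hio := ownerN_lt n hn (j:ℕ) j.isLt
    obtain ⟨m, hm, hpe⟩ := (owned_iff n hn hio (j:ℕ)).mp ⟨j.isLt, rfl⟩
    refine ⟨⟨m, hm⟩, ?_, ?_⟩
    · show crn n (pidxN n (ownerN n (j:ℕ)) m) = crn n ((j:ℕ))
      rw [hpe]
    · show crn n (pidxN n (ownerN n (j:ℕ)) m + 1) = crn n ((j:ℕ)+1)
      rw [hpe]
  · -- kEnvyFree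
    intro i j
    rw [hkv i j, hkv i i, if_pos rfl]
    by_cases h : i = j
    · rw [if_pos h]
    · rw [if_neg h]; norm_num
  · -- kEgal
    unfold kEgal
    have heq : (fun i => kval C0 A0 i i) = fun _ => (1:ℝ) :=
      funext fun i => by rw [hkv i i, if_pos rfl]
    rw [heq]
    exact ciInf_const
  · -- the contiguous bound
    intro B _hEF
    set i0 : Fin n := ⟨0, by omega⟩ with hi0
    set t := B.σ.symm i0 with hti
    have hab : B.x t.castSucc ≤ B.x t.succ := B.mono (Fin.castSucc_lt_succ : t.castSucc < t.succ).le
    have hbdd : BddBelow (Set.range fun i => cval C0 B i i) := (Set.finite_range _).bddBelow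
    have hle : ∀ i, cEgal C0 B ≤ cval C0 B i i := fun i => ciInf_le hbdd i
    rcases val0_cases n hn (B.x t.castSucc) (B.x t.succ) hab with hcase
      | ⟨j1, j2, hj1, hj2, ho1, ho2, hlt, ha, hb⟩
    · have h2 : cval C0 B i0 i0 ≤ 1/(n:ℝ) := hcase
      have h3 := hle i0
      linarith
    · have hmod1 : j1 % (n+1) = 0 := by
        by_contra hmm
        unfold ownerN at ho1; rw [if_neg hmm] at ho1
        exact Nat.succ_ne_zero _ ho1
      have hmod2 : j2 % (n+1) = 0 := by
        by_contra hmm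
        unfold ownerN at ho2; rw [if_neg hmm] at ho2
        exact Nat.succ_ne_zero _ ho2
      obtain ⟨q, hj1e⟩ := Nat.dvd_of_mod_eq_zero hmod1
      obtain ⟨r, hj2e⟩ := Nat.dvd_of_mod_eq_zero hmod2
      have hqr : q < r := by
        rw [hj1e, hj2e] at hlt
        exact Nat.lt_of_mul_lt_mul_left hlt
      have hge : (q+1)*(n+1) ≤ j2 := by
        have h1 : (q+1)*(n+1) ≤ r*(n+1) := Nat.mul_le_mul_right _ hqr
        have h2 : r*(n+1) = (n+1)*r := Nat.mul_comm _ _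
        omega
      have hqn : q + 1 < n := by
        by_contra hc
        push_neg at hc
        have h1 : n*(n+1) ≤ (q+1)*(n+1) := Nat.mul_le_mul_right _ hc
        have h2 : n*(n+1) = n*n + n := by ring
        omega
      set p : Fin n := ⟨q+1, hqn⟩ with hp
      have hpne : p ≠ i0 := by
        intro he
        have h0 : q+1 = 0 := by
          have := congrArg Fin.val he
          simpa [hp, hi0] using this
        omega
      have hsa : B.x t.castSucc < crn n (q*(n+1)+1) := by
        have h1 : q*(n+1)+1 = j1 + 1 := by rw [hj1e, Nat.mul_comm]
        rw [h1]; exact ha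
      have hsb : crn n ((q+1)*(n+1)) < B.x t.succ :=
        lt_of_le_of_lt (crn_mono n hn hge) hb
      set k := B.σ.symm p with hk
      have hkt : k ≠ t := fun he => hpne (B.σ.symm.injective (by rw [← hk, ← hti, he]))
      have habp : B.x k.castSucc ≤ B.x k.succ := B.mono (Fin.castSucc_lt_succ : k.castSucc < k.succ).le
      have hzero : cval C0 B p p = 0 := by
        show (∫ x in (B.x k.castSucc)..(B.x k.succ), dens n (q+1) x) = 0
        have hz : ∀ x ∈ Set.uIcc (B.x k.castSucc) (B.x k.succ), dens n (q+1) x = 0 := by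
          intro x hx
          rw [Set.uIcc_of_le habp] at hx
          rcases lt_or_gt_of_ne hkt with hlt2 | hlt2
          · have hks : B.x k.succ ≤ B.x t.castSucc :=
              B.mono (Fin.succ_le_castSucc_iff.mpr hlt2)
            exact dens_block_zero n hn q x
              (Or.inl (le_of_lt (lt_of_le_of_lt (hx.2.trans hks) hsa)))
          · have hks : B.x t.succ ≤ B.x k.castSucc :=
              B.mono (Fin.succ_le_castSucc_iff.mpr hlt2)
            exact dens_block_zero n hn q x
              (Or.inr (le_of_lt (lt_of_lt_of_le hsb (hks.trans hx.1))))
        calc (∫ x in (B.x k.castSucc)..(B.x k.succ), dens n (q+1) x)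
            = ∫ x in (B.x k.castSucc)..(B.x k.succ), (0:ℝ) :=
              intervalIntegral.integral_congr hz
          _ = 0 := by simp
      have h3 := hle p
      have h0le : (0:ℝ) ≤ 1/(n:ℝ) + δ := by positivity
      rw [hzero] at h3
      linarith
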